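/- Let N ≥ 1 and p ≥ 1 be natural numbers, let λ, μ, δ, L > 0 be reals with 2λμ(L + δ) ≤ 1 and N·sin²(πλμδ) ≥ 1, and let s ∈ ℝ^p satisfy |s_m| ≤ L for every coordinate m. Define c_g : Fin N → ℝ by c_g(g) = −g/(N λ μ) for 0 ≤ g ≤ N/2 − 1 and c_g(g) = (N − g)/(N λ μ) for N/2 ≤ g ≤ N − 1, and for g ∈ (Fin N)^p define χ(g) = N^{−p} · Σ_{h ∈ (Fin N)^p} exp(2πi·((g·h)/N + λμ·(s·h))). Then Σ_{g} |χ(g)|² ≥ (1 − 1/(N·sin²(πλμδ)))^p, where the sum runs over all g ∈ (Fin N)^p with |c_g(g_m) − s_m| < δ for every coordinate m. -/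

import Mathlib

set_option maxHeartbeats 1000000
open Real Finset
open scoped Classical

noncomputable def ee (x : ℝ) : ℂ := Complex.exp (2 * π * Complex.I * x)

lemma ee_eq (x : ℝ) : ee x = Complex.exp ((2 * π * x : ℝ) * Complex.I) := by
  rw [ee]; congr 1; push_cast; ring

lemma ee_add (x y : ℝ) : ee (x + y) = ee x * ee y := by
  simp [ee, ← Complex.exp_add]; ring_nf

lemma ee_int (n : ℤ) : ee n = 1 := by
  simp [ee]
  rw [show (2 : ℂ) * π * Complex.I * n = n * (2 * π * Complex.I) by ring]
  exact Complex.exp_int_mul_two_pi_mul_I n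

lemma abs_ee (x : ℝ) : ‖(ee x)‖ = 1 := by
  rw [ee_eq]; exact Complex.norm_exp_ofReal_mul_I _

lemma ee_pow (x : ℝ) (n : ℕ) : ee x ^ n = ee (n * x) := by
  simp [ee, ← Complex.exp_nat_mul]; ring_nf

lemma conj_ee (x : ℝ) : (starRingEnd ℂ) (ee x) = ee (-x) := by
  rw [ee_eq, ee_eq, ← Complex.exp_conj]
  congr 1
  rw [map_mul, Complex.conj_I, Complex.conj_ofReal]
  push_cast
  ring

lemma abs_ee_sub_one (x : ℝ) : ‖(ee x - 1)‖ = 2 * |Real.sin (π * x)| := by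
  have hre : (ee x - 1).re = Real.cos (2 * π * x) - 1 := by
    rw [ee_eq, Complex.sub_re, Complex.exp_ofReal_mul_I_re, Complex.one_re]
  have him : (ee x - 1).im = Real.sin (2 * π * x) := by
    rw [ee_eq, Complex.sub_im, Complex.exp_ofReal_mul_I_im, Complex.one_im, sub_zero]
  have hsq : ‖(ee x - 1)‖ ^ 2 = (2 * |Real.sin (π * x)|) ^ 2 := by
    rw [Complex.sq_norm, Complex.normSq_apply, hre, him]
    have h1 : Real.cos (2 * (π * x)) = 2 * Real.cos (π * x) ^ 2 - 1 := Real.cos_two_mul _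
    have h2 : Real.sin (π * x) ^ 2 + Real.cos (π * x) ^ 2 = 1 := Real.sin_sq_add_cos_sq _
    have h3 : Real.sin (2 * (π * x)) ^ 2 + Real.cos (2 * (π * x)) ^ 2 = 1 := Real.sin_sq_add_cos_sq _
    have h4 : |Real.sin (π * x)| ^ 2 = Real.sin (π * x) ^ 2 := sq_abs _
    rw [show 2 * π * x = 2 * (π * x) by ring]
    nlinarith [h1, h2, h3, h4]
  have h5 : (0:ℝ) ≤ ‖(ee x - 1)‖ := norm_nonneg _
  have h6 : (0:ℝ) ≤ 2 * |Real.sin (π * x)| := by positivity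
  nlinarith [hsq, h5, h6, sq_nonneg (‖(ee x - 1)‖ - 2 * |Real.sin (π * x)|)]

lemma ru_sum (N : ℕ) (hN : 1 ≤ N) (k : ℤ) :
    (∑ a : Fin N, ee ((a : ℕ) * (k : ℝ) / N)) = if (N:ℤ) ∣ k then (N:ℂ) else 0 := by
  have hN0 : (N:ℝ) ≠ 0 := by positivity
  have hterm : ∀ a : ℕ, ee ((a : ℕ) * (k : ℝ) / N) = ee ((k:ℝ)/N) ^ a := by
    intro a; rw [ee_pow]; congr 1; ring
  by_cases hdvd : (N:ℤ) ∣ k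
  · obtain ⟨t, ht⟩ := hdvd
    rw [if_pos ⟨t, ht⟩]
    have : ∀ a : Fin N, ee ((a : ℕ) * (k : ℝ) / N) = 1 := by
      intro a
      rw [show ((a:ℕ) * (k:ℝ) / N) = (((a:ℕ) * t : ℤ) : ℝ) by
        subst ht; push_cast; field_simp]
      exact ee_int _
    calc (∑ a : Fin N, ee ((a : ℕ) * (k : ℝ) / N)) = ∑ _a : Fin N, (1:ℂ) :=
          Finset.sum_congr rfl fun a _ => this a
      _ = (N:ℂ) := by simp
  · rw [if_neg hdvd]
    have hne : ee ((k:ℝ)/N) ≠ 1 := by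
      intro h
      rw [ee] at h
      rw [Complex.exp_eq_one_iff] at h
      obtain ⟨n, hn⟩ := h
      have hI : (2 * (π:ℂ) * Complex.I) ≠ 0 := by
        simp [Real.pi_ne_zero, Complex.I_ne_zero]
      have h2 : ((((k:ℝ)/(N:ℝ) : ℝ)):ℂ) = (n:ℂ) :=
        mul_left_cancel₀ hI (by rw [hn]; ring)
      have h3 : (k:ℝ)/N = (n:ℝ) := by exact_mod_cast h2
      have h4 : (k:ℝ) = (n:ℝ) * N := by field_simp at h3; linarith
      have h5 : k = n * N := by exact_mod_cast h4
      exact hdvd ⟨n, by linarith [h5]⟩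
    calc (∑ a : Fin N, ee ((a : ℕ) * (k : ℝ) / N))
        = ∑ a : Fin N, ee ((k:ℝ)/N) ^ (a:ℕ) := Finset.sum_congr rfl fun a _ => hterm a
      _ = ∑ a ∈ Finset.range N, ee ((k:ℝ)/N) ^ a := Fin.sum_univ_eq_sum_range _ _
      _ = 0 := by
          rw [geom_sum_eq hne, ee_pow,
            show (N:ℝ) * ((k:ℝ)/N) = ((k:ℤ):ℝ) by push_cast; field_simp, ee_int]
          simp

lemma parseval (N : ℕ) (hN : 1 ≤ N) (c : ℝ) :
    ∑ a : Fin N, (‖(∑ h : Fin N, ee ((a:ℕ) * (h:ℕ) / N + c * (h:ℕ)))‖) ^ 2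
      = (N:ℝ)^2 := by
  have key : (∑ a : Fin N, ((‖(∑ h : Fin N, ee ((a:ℕ) * (h:ℕ) / N + c * (h:ℕ)))‖) ^ 2 : ℂ))
      = (N:ℂ)^2 := by
    have habs : ∀ z : ℂ, ((‖z‖)^2 : ℂ) = z * (starRingEnd ℂ) z := by
      intro z
      rw [Complex.mul_conj]
      norm_cast
      exact Complex.sq_norm z
    calc (∑ a : Fin N, ((‖(∑ h : Fin N, ee ((a:ℕ) * (h:ℕ) / N + c * (h:ℕ)))‖) ^ 2 : ℂ))
        = ∑ a : Fin N, ∑ h : Fin N, ∑ h' : Fin N,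
            ee (c * (((h:ℕ):ℝ) - ((h':ℕ):ℝ))) * ee ((a:ℕ) * (((((h:ℕ):ℤ) - ((h':ℕ):ℤ) : ℤ)):ℝ) / N) := by
          refine Finset.sum_congr rfl fun a _ => ?_
          rw [habs, map_sum, Finset.sum_mul_sum]
          refine Finset.sum_congr rfl fun h _ => Finset.sum_congr rfl fun h' _ => ?_
          rw [conj_ee, ← ee_add, ← ee_add]
          congr 1
          push_cast
          ring
      _ = ∑ h : Fin N, ∑ h' : Fin N,
            ee (c * (((h:ℕ):ℝ) - ((h':ℕ):ℝ))) * ∑ a : Fin N, ee ((a:ℕ) * (((((h:ℕ):ℤ) - ((h':ℕ):ℤ) : ℤ)):ℝ) / N) := by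
          rw [Finset.sum_comm]
          refine Finset.sum_congr rfl fun h _ => ?_
          rw [Finset.sum_comm]
          refine Finset.sum_congr rfl fun h' _ => ?_
          rw [Finset.mul_sum]
      _ = ∑ h : Fin N, ∑ h' : Fin N,
            ee (c * (((h:ℕ):ℝ) - ((h':ℕ):ℝ))) * (if h = h' then (N:ℂ) else 0) := by
          refine Finset.sum_congr rfl fun h _ => Finset.sum_congr rfl fun h' _ => ?_
          rw [ru_sum N hN]
          congr 1
          by_cases he : h = h'
          · subst he; simp
          · rw [if_neg he, if_neg]
            intro hdvd
            have h1 := h.isLt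
            have h2 := h'.isLt
            have h0 : (((h:ℕ):ℤ) - ((h':ℕ):ℤ) : ℤ) = 0 := by
              apply Int.eq_zero_of_abs_lt_dvd hdvd
              rw [abs_sub_lt_iff]
              omega
            exact he (Fin.ext (by omega))
      _ = ∑ h : Fin N, (N:ℂ) := by
          refine Finset.sum_congr rfl fun h _ => ?_
          rw [Finset.sum_eq_single h]
          · simp [ee, Complex.exp_ne_zero]
          · intro b _ hb
            rw [if_neg (Ne.symm hb), mul_zero]
          · intro hh; exact absurd (Finset.mem_univ h) hh
      _ = (N:ℂ)^2 := by simp; ring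
  have := key
  rw [show (∑ a : Fin N, ((‖(∑ h : Fin N, ee ((a:ℕ) * (h:ℕ) / N + c * (h:ℕ)))‖) ^ 2 : ℂ))
      = (((∑ a : Fin N, (‖(∑ h : Fin N, ee ((a:ℕ) * (h:ℕ) / N + c * (h:ℕ)))‖) ^ 2 : ℝ)):ℂ) from by push_cast; ring] at this
  exact_mod_cast this

lemma sin_lb (cst t : ℝ) (h0 : 0 < cst) (hc : cst ≤ 1/2) (h1 : cst ≤ |t|) (h2 : |t| ≤ 1 - cst) :
    Real.sin (π * cst) ≤ |Real.sin (π * t)| := by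
  have hmono : ∀ b : ℝ, cst ≤ b → b ≤ 1/2 → Real.sin (π * cst) ≤ Real.sin (π * b) := by
    intro b hb1 hb2
    apply Real.strictMonoOn_sin.monotoneOn
    · constructor
      · nlinarith [Real.pi_pos]
      · nlinarith [Real.pi_pos]
    · constructor
      · nlinarith [Real.pi_pos]
      · nlinarith [Real.pi_pos]
    · nlinarith [Real.pi_pos]
  have habs : |Real.sin (π * t)| = Real.sin (π * |t|) := by
    rcases abs_cases t with ⟨ht, _⟩ | ⟨ht, _⟩
    · rw [ht]
      rw [abs_of_nonneg]
      apply Real.sin_nonneg_of_nonneg_of_le_pi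
      · positivity
      · nlinarith [Real.pi_pos]
    · rw [ht, mul_neg, Real.sin_neg]
      have hnn : 0 ≤ Real.sin (π * (-t)) := by
        apply Real.sin_nonneg_of_nonneg_of_le_pi
        · nlinarith [Real.pi_pos]
        · nlinarith [Real.pi_pos]
      rw [mul_neg, Real.sin_neg] at hnn
      rw [abs_of_nonpos (by linarith)]
  rw [habs]
  rcases le_or_gt (|t|) (1/2) with hle | hgt
  · exact hmono _ h1 hle
  · rw [show π * |t| = π - π * (1 - |t|) by ring, Real.sin_pi_sub]
    exact hmono _ (by linarith) (by linarith)

lemma coord (N : ℕ) (hN : 1 ≤ N) (lam μ δ L : ℝ) (hlam : 0 < lam) (hμ : 0 < μ)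
    (hδ : 0 < δ) (hL : 0 < L)
    (hband : 2 * lam * μ * (L + δ) ≤ 1)
    (hNs : 1 ≤ (N : ℝ) * Real.sin (π * lam * μ * δ) ^ 2)
    (θ : ℝ) (hθ : |θ| ≤ L) (cg : Fin N → ℝ)
    (hcg : ∀ g : Fin N, cg g =
      if 2 * (g : ℕ) < N then -((g : ℕ) : ℝ) / ((N : ℝ) * lam * μ)
      else ((N : ℝ) - ((g : ℕ) : ℝ)) / ((N : ℝ) * lam * μ)) :
    1 - 1 / ((N : ℝ) * Real.sin (π * lam * μ * δ) ^ 2) ≤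
      ∑ a ∈ Finset.univ.filter (fun a : Fin N => |cg a - θ| < δ),
        (‖(∑ h : Fin N, ee ((a:ℕ) * (h:ℕ) / N + (lam*μ*θ) * (h:ℕ)))‖)^2 / (N:ℝ)^2 := by
  have hN0 : (0:ℝ) < N := by exact_mod_cast hN
  have hlm : 0 < lam * μ := by positivity
  have hcδ : 0 < lam * μ * δ := by positivity
  have hc2 : lam * μ * δ ≤ 1/2 := by nlinarith
  set σ := Real.sin (π * lam * μ * δ) with hσ
  have hσpos : 0 < σ := by
    apply Real.sin_pos_of_pos_of_lt_pi
    · positivity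
    · nlinarith [Real.pi_pos]
  set F : Fin N → ℂ := fun a => ∑ h : Fin N, ee ((a:ℕ) * (h:ℕ) / N + (lam*μ*θ) * (h:ℕ)) with hFdef
  have hbad : ∀ a : Fin N, ¬(|cg a - θ| < δ) → ‖(F a)‖ ≤ 1/σ := by
    intro a ha
    push_neg at ha
    set x : ℝ := (a:ℕ)/N + lam*μ*θ with hx
    set y : ℝ := lam*μ*(θ - cg a) with hy
    have hxy : ∃ n : ℤ, x = y + n := by
      rw [hx, hy, hcg a]
      by_cases h2a : 2 * (a:ℕ) < N
      · refine ⟨0, ?_⟩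
        rw [if_pos h2a]
        push_cast
        field_simp
        ring
      · refine ⟨1, ?_⟩
        rw [if_neg h2a]
        push_cast
        field_simp
        ring
    have hcga : lam * μ * |cg a| ≤ 1/2 := by
      rw [hcg a]
      by_cases h2a : 2 * (a:ℕ) < N
      · rw [if_pos h2a, neg_div, abs_neg, abs_of_nonneg (by positivity),
          show lam*μ*(((a:ℕ):ℝ)/((N:ℝ)*lam*μ)) = ((a:ℕ):ℝ)/(N:ℝ) from by field_simp]
        rw [div_le_div_iff₀ hN0 (by norm_num : (0:ℝ) < 2)]
        have : ((a:ℕ):ℝ) * 2 ≤ (N:ℝ) := by exact_mod_cast (by omega : (a:ℕ) * 2 ≤ N)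
        linarith
      · have haN : ((a:ℕ):ℝ) ≤ (N:ℝ) := by exact_mod_cast (a.isLt).le
        rw [if_neg h2a, abs_of_nonneg (by
          apply div_nonneg (by linarith) (by positivity)),
          show lam*μ*(((N:ℝ) - ((a:ℕ):ℝ))/((N:ℝ)*lam*μ)) = ((N:ℝ) - ((a:ℕ):ℝ))/(N:ℝ) from by field_simp]
        rw [div_le_div_iff₀ hN0 (by norm_num : (0:ℝ) < 2)]
        have : (N:ℝ) ≤ ((a:ℕ):ℝ) * 2 := by exact_mod_cast (by omega : N ≤ (a:ℕ) * 2)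
        linarith
    have hy1 : lam * μ * δ ≤ |y| := by
      rw [hy, abs_mul, abs_of_pos hlm]
      have h1 : δ ≤ |θ - cg a| := by rw [abs_sub_comm] at ha; exact ha
      nlinarith
    have hy2 : |y| ≤ 1 - lam*μ*δ := by
      rw [hy, abs_mul, abs_of_pos hlm]
      have h1 : |θ - cg a| ≤ |θ| + |cg a| := by
        rw [sub_eq_add_neg]
        exact (abs_add_le _ _).trans (by rw [abs_neg])
      have h2 : 0 ≤ |cg a| := abs_nonneg _
      nlinarith
    have hσy : σ ≤ |Real.sin (π * y)| := by
      rw [hσ, show π * lam * μ * δ = π * (lam*μ*δ) by ring]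
      exact sin_lb (lam*μ*δ) y hcδ hc2 hy1 hy2
    have hex : ee x = ee y := by
      obtain ⟨n, hn⟩ := hxy
      rw [hn, ee_add, ee_int, mul_one]
    have habsx : ‖(ee x - 1)‖ = 2 * |Real.sin (π * y)| := by
      rw [hex, abs_ee_sub_one]
    have hne : ee x ≠ 1 := by
      intro h
      rw [h, sub_self, norm_zero] at habsx
      nlinarith
    have hFa : F a = (ee x ^ N - 1) / (ee x - 1) := by
      show (∑ h : Fin N, ee ((a:ℕ) * (h:ℕ) / N + (lam*μ*θ) * (h:ℕ))) = _
      calc (∑ h : Fin N, ee ((a:ℕ) * (h:ℕ) / N + (lam*μ*θ) * (h:ℕ)))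
          = ∑ h : Fin N, ee x ^ (h:ℕ) := by
            refine Finset.sum_congr rfl fun h _ => ?_
            rw [ee_pow, hx]
            congr 1
            field_simp
        _ = ∑ h ∈ Finset.range N, ee x ^ h := Fin.sum_univ_eq_sum_range _ _
        _ = (ee x ^ N - 1) / (ee x - 1) := geom_sum_eq hne N
    rw [hFa, norm_div]
    have hnum : ‖(ee x ^ N - 1)‖ ≤ 2 := by
      refine (norm_sub_le _ _).trans ?_
      rw [norm_pow, abs_ee, one_pow, norm_one]
      norm_num
    have hden : 2 * σ ≤ ‖(ee x - 1)‖ := by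
      rw [habsx]; nlinarith
    calc ‖(ee x ^ N - 1)‖ / ‖(ee x - 1)‖
        ≤ 2 / (2 * σ) := div_le_div₀ (by norm_num) hnum (by positivity) hden
      _ = 1/σ := by field_simp
  -- assembly
  have hall : ∑ a : Fin N, (‖(F a)‖)^2/(N:ℝ)^2 = 1 := by
    rw [← Finset.sum_div]
    rw [show (∑ a : Fin N, (‖(F a)‖)^2) = (N:ℝ)^2 from parseval N hN (lam*μ*θ)]
    field_simp
  have hsplit := Finset.sum_filter_add_sum_filter_not Finset.univ
    (fun a : Fin N => |cg a - θ| < δ) (fun a => (‖(F a)‖)^2/(N:ℝ)^2)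
  have hbs : ∑ a ∈ Finset.univ.filter (fun a : Fin N => ¬(|cg a - θ| < δ)),
      (‖(F a)‖)^2/(N:ℝ)^2 ≤ (N:ℝ) * ((1/σ)^2/(N:ℝ)^2) := by
    have hcard : (Finset.univ.filter (fun a : Fin N => ¬(|cg a - θ| < δ))).card ≤ N := by
      calc _ ≤ Finset.univ.card := Finset.card_filter_le _ _
        _ = N := by simp
    calc ∑ a ∈ Finset.univ.filter (fun a : Fin N => ¬(|cg a - θ| < δ)),
          (‖(F a)‖)^2/(N:ℝ)^2
        ≤ (Finset.univ.filter (fun a : Fin N => ¬(|cg a - θ| < δ))).card • ((1/σ)^2/(N:ℝ)^2) := by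
          apply Finset.sum_le_card_nsmul
          intro a hai
          have h1 := hbad a (Finset.mem_filter.mp hai).2
          gcongr
      _ = ((Finset.univ.filter (fun a : Fin N => ¬(|cg a - θ| < δ))).card : ℝ) * ((1/σ)^2/(N:ℝ)^2) := nsmul_eq_mul _ _
      _ ≤ (N:ℝ) * ((1/σ)^2/(N:ℝ)^2) := by
          apply mul_le_mul_of_nonneg_right _ (by positivity)
          exact_mod_cast hcard
  have heq : (N:ℝ) * ((1/σ)^2/(N:ℝ)^2) = 1/((N:ℝ)*σ^2) := by
    field_simp
  rw [heq] at hbs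
  linarith [hsplit, hall, hbs]

lemma ee_sum {ι : Type*} (t : Finset ι) (f : ι → ℝ) :
    ee (∑ i ∈ t, f i) = ∏ i ∈ t, ee (f i) := by
  rw [ee, Complex.ofReal_sum, Finset.mul_sum, Complex.exp_sum]
  rfl

theorem stmt_15 (N p : ℕ) (hN : 1 ≤ N) (hp : 1 ≤ p)
    (lam μ δ L : ℝ) (hlam : 0 < lam) (hμ : 0 < μ) (hδ : 0 < δ) (hL : 0 < L)
    (hband : 2 * lam * μ * (L + δ) ≤ 1)
    (hNs : 1 ≤ (N : ℝ) * Real.sin (π * lam * μ * δ) ^ 2)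
    (s : Fin p → ℝ) (hs : ∀ m : Fin p, |s m| ≤ L)
    (cg : Fin N → ℝ)
    (hcg : ∀ g : Fin N, cg g =
      if 2 * (g : ℕ) < N then -((g : ℕ) : ℝ) / ((N : ℝ) * lam * μ)
      else ((N : ℝ) - ((g : ℕ) : ℝ)) / ((N : ℝ) * lam * μ))
    (χ : (Fin p → Fin N) → ℂ)
    (hχ : ∀ g : Fin p → Fin N, χ g = ((N : ℂ) ^ p)⁻¹ *
      ∑ h : Fin p → Fin N, Complex.exp (2 * π * Complex.I *
        ((∑ m : Fin p, ((g m : ℕ) : ℝ) * ((h m : ℕ) : ℝ)) / (N : ℝ) +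
         lam * μ * ∑ m : Fin p, s m * ((h m : ℕ) : ℝ)))) :
    (1 - 1 / ((N : ℝ) * Real.sin (π * lam * μ * δ) ^ 2)) ^ p ≤
      ∑ g ∈ Finset.univ.filter (fun g : Fin p → Fin N =>
          ∀ m : Fin p, |cg (g m) - s m| < δ),
        ‖χ g‖ ^ 2 := by
  have hN0 : (0:ℝ) < N := by exact_mod_cast hN
  have hterm : ∀ g h : Fin p → Fin N, Complex.exp (2 * π * Complex.I *
        ((∑ m : Fin p, ((g m : ℕ) : ℝ) * ((h m : ℕ) : ℝ)) / (N : ℝ) +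
         lam * μ * ∑ m : Fin p, s m * ((h m : ℕ) : ℝ)))
      = ∏ m : Fin p, ee (((g m:ℕ):ℝ) * ((h m:ℕ):ℝ) / N + (lam*μ*(s m)) * ((h m:ℕ):ℝ)) := by
    intro g h
    have hre : (∑ m : Fin p, ((g m:ℕ):ℝ) * ((h m:ℕ):ℝ)) / (N:ℝ)
          + lam * μ * ∑ m : Fin p, s m * ((h m:ℕ):ℝ)
        = ∑ m : Fin p, (((g m:ℕ):ℝ) * ((h m:ℕ):ℝ) / N + (lam*μ*(s m)) * ((h m:ℕ):ℝ)) := by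
      rw [Finset.sum_add_distrib]
      congr 1
      · rw [Finset.sum_div]
      · rw [Finset.mul_sum]
        exact Finset.sum_congr rfl fun m _ => by ring
    calc Complex.exp (2 * π * Complex.I *
          ((∑ m : Fin p, ((g m : ℕ) : ℝ) * ((h m : ℕ) : ℝ)) / (N : ℝ) +
           lam * μ * ∑ m : Fin p, s m * ((h m : ℕ) : ℝ)))
        = ee ((∑ m : Fin p, ((g m:ℕ):ℝ) * ((h m:ℕ):ℝ)) / (N:ℝ)
            + lam * μ * ∑ m : Fin p, s m * ((h m:ℕ):ℝ)) := by
          rw [ee]; congr 1; push_cast; ring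
      _ = ee (∑ m : Fin p, (((g m:ℕ):ℝ) * ((h m:ℕ):ℝ) / N + (lam*μ*(s m)) * ((h m:ℕ):ℝ))) := by
          rw [hre]
      _ = ∏ m : Fin p, ee (((g m:ℕ):ℝ) * ((h m:ℕ):ℝ) / N + (lam*μ*(s m)) * ((h m:ℕ):ℝ)) :=
          ee_sum _ _
  have hchi : ∀ g : Fin p → Fin N, ‖(χ g)‖^2 =
      ∏ m : Fin p, (‖(∑ a : Fin N,
        ee (((g m:ℕ):ℝ) * ((a:ℕ):ℝ) / N + (lam*μ*(s m)) * ((a:ℕ):ℝ)))‖)^2 / (N:ℝ)^2 := by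
    intro g
    have h1 : χ g = ((N : ℂ) ^ p)⁻¹ * ∏ m : Fin p, ∑ a : Fin N,
        ee (((g m:ℕ):ℝ) * ((a:ℕ):ℝ) / N + (lam*μ*(s m)) * ((a:ℕ):ℝ)) := by
      rw [hχ g]
      congr 1
      calc (∑ h : Fin p → Fin N, Complex.exp (2 * π * Complex.I *
            ((∑ m : Fin p, ((g m : ℕ) : ℝ) * ((h m : ℕ) : ℝ)) / (N : ℝ) +
             lam * μ * ∑ m : Fin p, s m * ((h m : ℕ) : ℝ))))
          = ∑ h : Fin p → Fin N, ∏ m : Fin p,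
              ee (((g m:ℕ):ℝ) * ((h m:ℕ):ℝ) / N + (lam*μ*(s m)) * ((h m:ℕ):ℝ)) :=
            Finset.sum_congr rfl fun h _ => hterm g h
        _ = ∑ h ∈ Fintype.piFinset (fun _ : Fin p => (Finset.univ : Finset (Fin N))),
              ∏ m : Fin p,
              ee (((g m:ℕ):ℝ) * ((h m:ℕ):ℝ) / N + (lam*μ*(s m)) * ((h m:ℕ):ℝ)) := by
            rw [Fintype.piFinset_univ]
        _ = ∏ m : Fin p, ∑ a : Fin N,
              ee (((g m:ℕ):ℝ) * ((a:ℕ):ℝ) / N + (lam*μ*(s m)) * ((a:ℕ):ℝ)) :=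
            (Finset.prod_univ_sum (fun _ : Fin p => (Finset.univ : Finset (Fin N)))
              (fun m a => ee (((g m:ℕ):ℝ) * ((a:ℕ):ℝ) / N + (lam*μ*(s m)) * ((a:ℕ):ℝ)))).symm
    rw [h1, norm_mul, norm_inv, norm_pow, Complex.norm_natCast, norm_prod]
    rw [mul_pow, ← Finset.prod_pow, inv_pow, Finset.prod_div_distrib, Finset.prod_const,
      Finset.card_univ, Fintype.card_fin]
    rw [← pow_mul, ← pow_mul, Nat.mul_comm p 2, inv_mul_eq_div]
  have hset : Finset.univ.filter (fun g : Fin p → Fin N => ∀ m : Fin p, |cg (g m) - s m| < δ)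
      = Fintype.piFinset (fun m => Finset.univ.filter (fun a : Fin N => |cg a - s m| < δ)) := by
    ext g
    simp [Fintype.mem_piFinset]
  have hpos : (0:ℝ) < (N : ℝ) * Real.sin (π * lam * μ * δ) ^ 2 := lt_of_lt_of_le one_pos hNs
  have hnn : (0:ℝ) ≤ 1 - 1 / ((N : ℝ) * Real.sin (π * lam * μ * δ) ^ 2) := by
    have : 1 / ((N : ℝ) * Real.sin (π * lam * μ * δ) ^ 2) ≤ 1 := by
      rw [div_le_one hpos]; linarith
    linarith
  rw [hset]
  calc (1 - 1 / ((N : ℝ) * Real.sin (π * lam * μ * δ) ^ 2)) ^ p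
      = ∏ _m : Fin p, (1 - 1 / ((N : ℝ) * Real.sin (π * lam * μ * δ) ^ 2)) := by
        rw [Finset.prod_const, Finset.card_univ, Fintype.card_fin]
    _ ≤ ∏ m : Fin p, ∑ a ∈ Finset.univ.filter (fun a : Fin N => |cg a - s m| < δ),
          (‖(∑ h : Fin N,
            ee (((a:ℕ):ℝ) * ((h:ℕ):ℝ) / N + (lam*μ*(s m)) * ((h:ℕ):ℝ)))‖)^2 / (N:ℝ)^2 := by
        apply Finset.prod_le_prod (fun m _ => hnn)
        intro m _
        exact coord N hN lam μ δ L hlam hμ hδ hL hband hNs (s m) (hs m) cg hcg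
    _ = ∑ g ∈ Fintype.piFinset (fun m => Finset.univ.filter (fun a : Fin N => |cg a - s m| < δ)),
          ∏ m : Fin p, (‖(∑ h : Fin N,
            ee (((g m:ℕ):ℝ) * ((h:ℕ):ℝ) / N + (lam*μ*(s m)) * ((h:ℕ):ℝ)))‖)^2 / (N:ℝ)^2 :=
        Finset.prod_univ_sum _ _
    _ = ∑ g ∈ Fintype.piFinset (fun m => Finset.univ.filter (fun a : Fin N => |cg a - s m| < δ)),
          ‖(χ g)‖ ^ 2 :=
        Finset.sum_congr rfl fun g _ => (hchi g).symm
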